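/- Let f ∈ F_L, let δ < √(6/L), and let X_δ be the solution of the smoothed ODE Ẍ_δ + (3/max(δ,t))Ẋ_δ + ∇f(X_δ) = 0 with X_δ(0) = x₀, Ẋ_δ(0) = 0, with M_δ(t) = sup_{u ∈ (0,t]} ‖Ẋ_δ(u)‖/u. Then for every t with δ < t < √(12/L), M_δ(t) ≤ (5 − Lδ²/6)·‖∇f(x₀)‖ / (4(1 − Lδ²/6)(1 − Lt²/12)). -/

import Mathlib

open Set Filter Topology

noncomputable section

abbrev E (n : ℕ) := EuclideanSpace ℝ (Fin n)

def MemFL (n : ℕ) (L : ℝ) (f : E n → ℝ) : Prop :=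
  ConvexOn ℝ Set.univ f ∧ ContDiff ℝ 1 f ∧
    ∀ x y, ‖gradient f x - gradient f y‖ ≤ L * ‖x - y‖

/-- The solution `X` (with velocity `V = Ẋ`) of the smoothed ODE
`Ẍ + (3/max(δ,t))Ẋ + ∇f(X) = 0`, `X(0) = x₀`, `Ẋ(0) = 0`, on `[0,∞)`. -/
def SmoothedSol (n : ℕ) (f : E n → ℝ) (δ : ℝ) (x0 : E n) (X V : ℝ → E n) : Prop :=
  X 0 = x0 ∧ V 0 = 0 ∧
  (∀ t ∈ Set.Ici (0:ℝ), HasDerivWithinAt X (V t) (Set.Ici 0) t) ∧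
  (∀ t ∈ Set.Ici (0:ℝ),
    HasDerivWithinAt V (-(3 / max δ t) • V t - gradient f (X t)) (Set.Ici 0) t)

lemma continuous_gradient' {n : ℕ} {f : E n → ℝ} (hf : ContDiff ℝ 1 f) :
    Continuous (gradient f) := by
  have h := hf.continuous_fderiv one_ne_zero
  exact (InnerProductSpace.toDual ℝ (E n)).symm.continuous.comp h

lemma ftc_norm_bound {n : ℕ} {F G : ℝ → E n} {p q : ℝ} (hpq : p ≤ q)
    (hcont : ContinuousOn F (Icc p q))
    (hderiv : ∀ x ∈ Ioo p q, HasDerivWithinAt F (G x) (Ioi x) x)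
    (hGcont : ContinuousOn G (Icc p q))
    {φ : ℝ → ℝ} (hφ : ∀ x ∈ Icc p q, ‖G x‖ ≤ φ x)
    (hφint : IntervalIntegrable φ MeasureTheory.volume p q) :
    ‖F q - F p‖ ≤ ∫ s in p..q, φ s := by
  have hint : IntervalIntegrable G MeasureTheory.volume p q :=
    hGcont.intervalIntegrable_of_Icc hpq
  rw [← intervalIntegral.integral_eq_sub_of_hasDeriv_right_of_le hpq hcont hderiv hint]
  calc ‖∫ s in p..q, G s‖ ≤ ∫ s in p..q, ‖G s‖ :=
        intervalIntegral.norm_integral_le_integral_norm hpq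
    _ ≤ ∫ s in p..q, φ s :=
        intervalIntegral.integral_mono_on hpq (hGcont.norm.intervalIntegrable_of_Icc hpq) hφint hφ

lemma aux_deriv_exp_smul {n : ℕ} (V g : ℝ → E n) (c x : ℝ)
    (hv : HasDerivWithinAt V (-c • V x - g x) (Ioi x) x) :
    HasDerivWithinAt (fun s => Real.exp (c*s) • V s)
      (Real.exp (c*x) • (-(g x))) (Ioi x) x := by
  have he : HasDerivAt (fun s => Real.exp (c*s)) (Real.exp (c*x) * c) x := by
    simpa [Function.comp_def] using (Real.hasDerivAt_exp (c*x)).comp x ((hasDerivAt_id x).const_mul c)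
  have h2 := (he.hasDerivWithinAt (s := Ioi x)).smul hv
  refine HasDerivWithinAt.congr_deriv h2 ?_
  match_scalars <;> ring

lemma aux_deriv_pow_smul {n : ℕ} (V g : ℝ → E n) (x : ℝ) (hx : 0 < x)
    (hv : HasDerivWithinAt V (-(3/x) • V x - g x) (Ioi x) x) :
    HasDerivWithinAt (fun s => s^3 • V s) (-(x^3) • (g x)) (Ioi x) x := by
  have he : HasDerivAt (fun s : ℝ => s^3) (3*x^2) x := by
    simpa using hasDerivAt_pow 3 x
  have h2 := (he.hasDerivWithinAt (s := Ioi x)).smul hv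
  refine HasDerivWithinAt.congr_deriv h2 ?_
  have hx' : x ≠ 0 := hx.ne'
  match_scalars <;> field_simp <;> ring

set_option maxHeartbeats 2000000 in
theorem smoothed_ode_M_bound (n : ℕ) (L : ℝ) (hL : 0 < L)
    (f : E n → ℝ) (hf : MemFL n L f) (x0 : E n)
    (δ : ℝ) (hδ0 : 0 < δ) (hδ : δ < Real.sqrt (6 / L))
    (X V : ℝ → E n) (hXV : SmoothedSol n f δ x0 X V)
    (t : ℝ) (htδ : δ < t) (ht : t < Real.sqrt (12 / L)) :
    sSup ((fun u => ‖V u‖ / u) '' Set.Ioc (0:ℝ) t) ≤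
      (5 - L * δ ^ 2 / 6) * ‖gradient f x0‖ /
        (4 * (1 - L * δ ^ 2 / 6) * (1 - L * t ^ 2 / 12)) := by
  obtain ⟨hX0, hV0, hX, hV⟩ := hXV
  have ht0 : 0 < t := lt_trans hδ0 htδ
  have hδ2 : δ ^ 2 < 6 / L := (Real.lt_sqrt hδ0.le).mp hδ
  have ht2 : t ^ 2 < 12 / L := (Real.lt_sqrt ht0.le).mp ht
  set G := ‖gradient f x0‖ with hGdef
  have hG0 : 0 ≤ G := norm_nonneg _
  set a := L * δ ^ 2 / 6 with hadef
  set b := L * t ^ 2 / 12 with hbdef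
  have ha0 : 0 ≤ a := by positivity
  have hb0 : 0 ≤ b := by positivity
  have ha1 : a < 1 := by
    have := (lt_div_iff₀ hL).mp hδ2; rw [hadef]; nlinarith
  have hb1 : b < 1 := by
    have := (lt_div_iff₀ hL).mp ht2; rw [hbdef]; nlinarith
  have ha1' : (0:ℝ) < 1 - a := by linarith
  have hb1' : (0:ℝ) < 1 - b := by linarith
  -- continuity facts
  have hXc : ContinuousOn X (Ici 0) := fun s hs => (hX s hs).continuousWithinAt
  have hVc : ContinuousOn V (Ici 0) := fun s hs => (hV s hs).continuousWithinAt
  have hgc : Continuous (gradient f) := continuous_gradient' hf.2.1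
  have hgXc : ContinuousOn (fun s => gradient f (X s)) (Ici 0) := hgc.comp_continuousOn hXc
  have hLip : ∀ s, ‖gradient f (X s)‖ ≤ G + L * ‖X s - x0‖ := by
    intro s
    have h1 : ‖gradient f (X s)‖ ≤ ‖gradient f x0‖ + ‖gradient f (X s) - gradient f x0‖ := by
      simpa using norm_add_le (gradient f x0) (gradient f (X s) - gradient f x0)
    have h2 := hf.2.2 (X s) x0
    exact le_trans h1 (by rw [hGdef]; linarith)
  -- right derivatives
  have hVd : ∀ x : ℝ, 0 < x →
      HasDerivWithinAt V (-(3 / max δ x) • V x - gradient f (X x)) (Ioi x) x :=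
    fun x hx => (hV x hx.le).mono (fun y hy => le_trans hx.le (le_of_lt hy))
  have hXd : ∀ x : ℝ, 0 < x → HasDerivWithinAt X (V x) (Ioi x) x :=
    fun x hx => (hX x hx.le).mono (fun y hy => le_trans hx.le (le_of_lt hy))
  -- a crude linear bound on ‖V‖, giving boundedness of the sup
  have hWc : ContinuousOn (fun s => -(3 / max δ s) • V s - gradient f (X s)) (Icc 0 t) := by
    have hmax : Continuous (fun s : ℝ => -(3 / max δ s)) :=
      (continuous_const.div (continuous_const.max continuous_id)
        (fun s => (lt_of_lt_of_le hδ0 (le_max_left δ s)).ne')).neg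
    exact (hmax.continuousOn.smul (hVc.mono (fun s hs => hs.1))).sub
      (hgXc.mono (fun s hs => hs.1))
  obtain ⟨C, hC⟩ := isCompact_Icc.exists_bound_of_continuousOn hWc
  have hlin : ∀ u ∈ Ioc (0:ℝ) t, ‖V u‖ ≤ C * u := by
    intro u hu
    have h1 : ‖V u - V 0‖ ≤ ∫ s in (0:ℝ)..u, C :=
      ftc_norm_bound hu.1.le (hVc.mono (fun s hs => hs.1))
        (fun x hx => hVd x hx.1)
        (hWc.mono (Icc_subset_Icc le_rfl hu.2))
        (fun x hx => hC x (Icc_subset_Icc le_rfl hu.2 hx))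
        intervalIntegrable_const
    rw [hV0, sub_zero, intervalIntegral.integral_const, sub_zero, smul_eq_mul] at h1
    linarith
  -- suprema
  set S := (fun u => ‖V u‖ / u) '' Set.Ioc (0:ℝ) t with hSdef
  have hSbdd : BddAbove S := by
    refine ⟨C, ?_⟩
    rintro x ⟨u, hu, rfl⟩
    rw [div_le_iff₀ hu.1]
    exact hlin u hu
  set M := sSup S with hMdef
  have hMle : ∀ u ∈ Ioc (0:ℝ) t, ‖V u‖ ≤ M * u := by
    intro u hu
    have h := le_csSup hSbdd (Set.mem_image_of_mem _ hu)
    rwa [div_le_iff₀ hu.1] at h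
  have hM0 : 0 ≤ M :=
    le_trans (by positivity) (le_csSup hSbdd (Set.mem_image_of_mem _ ⟨ht0, le_rfl⟩))
  set S₁ := (fun u => ‖V u‖ / u) '' Set.Ioc (0:ℝ) δ with hS₁def
  have hS₁bdd : BddAbove S₁ := hSbdd.mono (Set.image_mono (Ioc_subset_Ioc_right htδ.le))
  set M₁ := sSup S₁ with hM₁def
  have hM₁le : ∀ u ∈ Ioc (0:ℝ) δ, ‖V u‖ ≤ M₁ * u := by
    intro u hu
    have h := le_csSup hS₁bdd (Set.mem_image_of_mem _ hu)
    rwa [div_le_iff₀ hu.1] at h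
  have hM₁0 : 0 ≤ M₁ :=
    le_trans (by positivity) (le_csSup hS₁bdd (Set.mem_image_of_mem _ ⟨hδ0, le_rfl⟩))
  -- displacement bound
  have hXdisp : ∀ K s : ℝ, 0 ≤ K → 0 < s → s ≤ t → (∀ r ∈ Ioc (0:ℝ) s, ‖V r‖ ≤ K * r) →
      ‖X s - x0‖ ≤ K * s ^ 2 / 2 := by
    intro K s hK hs hst hVK
    have h1 : ‖X s - X 0‖ ≤ ∫ r in (0:ℝ)..s, K * r :=
      ftc_norm_bound hs.le (hXc.mono (fun r hr => hr.1))
        (fun x hx => hXd x hx.1)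
        (hVc.mono (fun r hr => hr.1))
        (fun x hx => by
          rcases eq_or_lt_of_le hx.1 with h | h
          · rw [← h, hV0, norm_zero, mul_zero]
          · exact hVK x ⟨h, hx.2⟩)
        ((continuous_const.mul continuous_id).intervalIntegrable 0 s)
    rw [hX0] at h1
    calc ‖X s - x0‖ ≤ ∫ r in (0:ℝ)..s, K * r := h1
      _ = K * s ^ 2 / 2 := by
          rw [intervalIntegral.integral_const_mul, integral_id]; ring
  -- gradient bound along the trajectory
  have hgb : ∀ K x : ℝ, 0 ≤ K → 0 ≤ x → x ≤ t → (∀ r ∈ Ioc (0:ℝ) x, ‖V r‖ ≤ K * r) →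
      ‖gradient f (X x)‖ ≤ G + L * K * x ^ 2 / 2 := by
    intro K x hK hx hxt hVK
    rcases eq_or_lt_of_le hx with h | h
    · rw [← h, hX0]; simp [hGdef]
    · have := hXdisp K x hK h hxt hVK
      have h2 := hLip x
      have h3 := mul_le_mul_of_nonneg_left this hL.le
      linarith
  -- small regime: u ∈ (0, δ]
  have hsmall : ∀ u ∈ Ioc (0:ℝ) δ, ‖V u‖ ≤ (G + a * M₁) * u := by
    intro u hu
    have huδ : u ≤ δ := hu.2
    have hut : u ≤ t := le_trans huδ htδ.le
    have hec : Continuous (fun s : ℝ => Real.exp ((3/δ)*s)) :=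
      Real.continuous_exp.comp (continuous_const.mul continuous_id)
    have key : ‖(fun s => Real.exp ((3/δ)*s) • V s) u -
        (fun s => Real.exp ((3/δ)*s) • V s) 0‖ ≤
        ∫ s in (0:ℝ)..u, Real.exp ((3/δ)*u) * (G + L * M₁ / 2 * s ^ 2) := by
      refine ftc_norm_bound hu.1.le
        (hec.continuousOn.smul (hVc.mono (fun s hs => hs.1)))
        (fun x hx => ?_)
        (G := fun x => Real.exp ((3/δ)*x) • (-(gradient f (X x))))
        (hec.continuousOn.smul ((hgXc.mono (fun s hs => hs.1)).neg))
        (fun x hx => ?_)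
        ((continuous_const.mul (continuous_const.add
          (continuous_const.mul (continuous_pow 2)))).intervalIntegrable 0 u)
      · have hv := hVd x hx.1
        rw [max_eq_left (le_of_lt (lt_of_lt_of_le hx.2 huδ))] at hv
        exact aux_deriv_exp_smul V (fun s => gradient f (X s)) (3/δ) x hv
      · rw [norm_smul, Real.norm_eq_abs, abs_of_pos (Real.exp_pos _), norm_neg]
        have h1 : Real.exp ((3/δ)*x) ≤ Real.exp ((3/δ)*u) := by
          apply Real.exp_le_exp.mpr
          have : (0:ℝ) ≤ 3/δ := by positivity
          nlinarith [hx.2]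
        have h2 : ‖gradient f (X x)‖ ≤ G + L * M₁ * x ^ 2 / 2 :=
          hgb M₁ x hM₁0 hx.1 (le_trans (le_trans hx.2 huδ) htδ.le)
            (fun r hr => hM₁le r ⟨hr.1, le_trans hr.2 (le_trans hx.2 huδ)⟩)
        have h3 : G + L * M₁ * x ^ 2 / 2 = G + L * M₁ / 2 * x ^ 2 := by ring
        rw [h3] at h2
        exact mul_le_mul h1 h2 (norm_nonneg _) (Real.exp_pos _).le
    simp only [hV0, smul_zero, sub_zero] at key
    rw [norm_smul, Real.norm_eq_abs, abs_of_pos (Real.exp_pos _)] at key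
    have hI : ∫ s in (0:ℝ)..u, Real.exp ((3/δ)*u) * (G + L * M₁ / 2 * s ^ 2) =
        Real.exp ((3/δ)*u) * (G * u + L * M₁ / 2 * (u ^ 3 / 3)) := by
      rw [intervalIntegral.integral_const_mul]
      congr 1
      rw [intervalIntegral.integral_add intervalIntegrable_const
        ((by fun_prop : Continuous (fun s : ℝ => L * M₁ / 2 * s ^ 2)).intervalIntegrable 0 u),
        intervalIntegral.integral_const, intervalIntegral.integral_const_mul,
        integral_pow]
      simp only [smul_eq_mul, sub_zero]
      push_cast; ring
    rw [hI] at key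
    have hVu : ‖V u‖ ≤ G * u + L * M₁ / 2 * (u ^ 3 / 3) :=
      le_of_mul_le_mul_left (by linarith [key]) (Real.exp_pos ((3/δ)*u))
    have hcube : L * M₁ / 2 * (u ^ 3 / 3) ≤ a * M₁ * u := by
      rw [hadef]
      have h1 : u ^ 2 ≤ δ ^ 2 := pow_le_pow_left₀ hu.1.le huδ 2
      have h0 : (0:ℝ) ≤ L * M₁ * u / 6 := by
        have := mul_nonneg (mul_nonneg hL.le hM₁0) hu.1.le
        linarith
      have h2 := mul_le_mul_of_nonneg_left h1 h0
      nlinarith [h2]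
    linarith [hVu, hcube]
  -- bound on M₁
  have hM₁b : M₁ ≤ G + a * M₁ := by
    apply Real.sSup_le
    · rintro x ⟨u, hu, rfl⟩
      rw [div_le_iff₀ hu.1]
      exact hsmall u hu
    · positivity
  have hM₁G : M₁ * (1 - a) ≤ G := by linarith
  have hDG : G + a * M₁ ≤ G / (1 - a) := by
    rw [le_div_iff₀ ha1']
    nlinarith [mul_le_mul_of_nonneg_left hM₁G ha0, mul_nonneg ha0 hG0]
  -- big regime: u ∈ [δ, t]
  have hbig : ∀ u : ℝ, δ ≤ u → u ≤ t → ‖V u‖ ≤ (G / (1 - a) + b * M) * u := by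
    intro u hδu hut
    have hu0 : 0 < u := lt_of_lt_of_le hδ0 hδu
    have key : ‖(fun s => s^3 • V s) u - (fun s => s^3 • V s) δ‖ ≤
        ∫ s in δ..u, (G * s ^ 3 + L * M / 2 * s ^ 5) := by
      refine ftc_norm_bound hδu
        ((continuous_pow 3).continuousOn.smul
          (hVc.mono (fun s hs => le_trans hδ0.le hs.1)))
        (fun x hx => ?_)
        (G := fun x => -(x^3) • (gradient f (X x)))
        (((continuous_pow 3).neg).continuousOn.smul
          (hgXc.mono (fun s hs => le_trans hδ0.le hs.1)))
        (fun x hx => ?_)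
        ((continuous_const.mul (continuous_pow 3)).add
          ((continuous_const.mul (continuous_pow 5))) |>.intervalIntegrable δ u)
      · have hx0 : 0 < x := lt_of_lt_of_le hδ0 hx.1.le
        have hv := hVd x hx0
        rw [max_eq_right hx.1.le] at hv
        exact aux_deriv_pow_smul V (fun s => gradient f (X s)) x hx0 hv
      · have hx0 : 0 ≤ x := le_trans hδ0.le hx.1
        rw [norm_smul, Real.norm_eq_abs, abs_neg, abs_of_nonneg (by positivity : (0:ℝ) ≤ x^3)]
        have h2 : ‖gradient f (X x)‖ ≤ G + L * M * x ^ 2 / 2 :=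
          hgb M x hM0 hx0 (le_trans hx.2 hut)
            (fun r hr => hMle r ⟨hr.1, le_trans hr.2 (le_trans hx.2 hut)⟩)
        nlinarith [mul_le_mul_of_nonneg_left h2 (pow_nonneg hx0 3)]
    have hI : ∫ s in δ..u, (G * s ^ 3 + L * M / 2 * s ^ 5) =
        G * (u ^ 4 - δ ^ 4) / 4 + L * M / 2 * ((u ^ 6 - δ ^ 6) / 6) := by
      rw [intervalIntegral.integral_add
        ((by fun_prop : Continuous (fun s : ℝ => G * s ^ 3)).intervalIntegrable δ u)
        ((by fun_prop : Continuous (fun s : ℝ => L * M / 2 * s ^ 5)).intervalIntegrable δ u),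
        intervalIntegral.integral_const_mul, intervalIntegral.integral_const_mul,
        integral_pow, integral_pow]
      push_cast; ring
    rw [hI] at key
    have hlow : u ^ 3 * ‖V u‖ - δ ^ 3 * ‖V δ‖ ≤ ‖u^3 • V u - δ^3 • V δ‖ := by
      have h := norm_sub_norm_le (u^3 • V u) (δ^3 • V δ)
      rw [norm_smul, norm_smul, Real.norm_eq_abs, Real.norm_eq_abs,
        abs_of_pos (by positivity : (0:ℝ) < u^3), abs_of_pos (by positivity : (0:ℝ) < δ^3)] at h
      linarith
    set D := G / (1 - a) with hDdef
    have hD0 : 0 ≤ D := div_nonneg hG0 ha1'.le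
    have hVδ : ‖V δ‖ ≤ (G + a * M₁) * δ := hsmall δ ⟨hδ0, le_rfl⟩
    have hVδ' : δ ^ 3 * ‖V δ‖ ≤ δ ^ 4 * D := by
      have h1 : δ ^ 3 * ‖V δ‖ ≤ δ ^ 3 * ((G + a * M₁) * δ) :=
        mul_le_mul_of_nonneg_left hVδ (by positivity)
      have h2 := mul_le_mul_of_nonneg_left hDG (by positivity : (0:ℝ) ≤ δ ^ 4)
      nlinarith [h1, h2]
    have hGD : G ≤ D := by
      rw [hDdef, le_div_iff₀ ha1']
      nlinarith [mul_nonneg ha0 hG0]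
    have hk : u ^ 3 * ‖V u‖ ≤ δ ^ 3 * ‖V δ‖ +
        (G * (u ^ 4 - δ ^ 4) / 4 + L * M / 2 * ((u ^ 6 - δ ^ 6) / 6)) := by
      linarith [hlow, key]
    have h4 : (0:ℝ) ≤ u ^ 4 - δ ^ 4 := by
      have := pow_le_pow_left₀ hδ0.le hδu 4; linarith
    have e1 : G * (u ^ 4 - δ ^ 4) / 4 ≤ D * (u ^ 4 - δ ^ 4) := by
      have h5 := mul_le_mul_of_nonneg_right hGD h4
      have h6 := mul_nonneg hG0 h4
      linarith
    have e2 : L * M / 2 * ((u ^ 6 - δ ^ 6) / 6) ≤ b * M * u ^ 4 := by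
      rw [hbdef]
      have h6 : u ^ 2 ≤ t ^ 2 := pow_le_pow_left₀ hu0.le hut 2
      have h7 := mul_le_mul_of_nonneg_left h6
        (show (0:ℝ) ≤ L * M * u ^ 4 / 12 by positivity)
      have h8 : (0:ℝ) ≤ L * M / 12 * δ ^ 6 := by positivity
      nlinarith [h7, h8]
    have hu3 : u ^ 3 * ‖V u‖ ≤ u ^ 3 * ((D + b * M) * u) := by
      nlinarith [hk, hVδ', e1, e2]
    exact le_of_mul_le_mul_left hu3 (by positivity)
  -- combine: every element of S is ≤ G/(1-a) + b*M
  have hMb : M ≤ G / (1 - a) + b * M := by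
    apply Real.sSup_le
    · rintro x ⟨u, hu, rfl⟩
      rw [div_le_iff₀ hu.1]
      rcases le_total u δ with h | h
      · have h1 := hsmall u ⟨hu.1, h⟩
        have h2 : (G + a * M₁) * u ≤ (G / (1 - a) + b * M) * u := by
          apply mul_le_mul_of_nonneg_right _ hu.1.le
          have : (0:ℝ) ≤ b * M := mul_nonneg hb0 hM0
          linarith [hDG]
        linarith
      · exact hbig u h hu.2
    · have : (0:ℝ) ≤ G / (1 - a) := div_nonneg hG0 ha1'.le
      have : (0:ℝ) ≤ b * M := mul_nonneg hb0 hM0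
      linarith [div_nonneg hG0 ha1'.le]
  have hMG : M * (1 - b) * (1 - a) ≤ G := by
    have h1 : M * (1 - b) ≤ G / (1 - a) := by linarith
    have := (le_div_iff₀ ha1').mp h1
    linarith
  rw [le_div_iff₀ (by positivity : (0:ℝ) < 4 * (1 - a) * (1 - b))]
  nlinarith [hMG, mul_nonneg (sub_nonneg.mpr ha1.le) hG0, hG0, hM0]
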